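/- Let A : ℝ → ℝ be strictly concave and strictly increasing on [2, ∞), extended to be 0 on [0, 2], and suppose A(n) < 2A(n/2) for all n ≥ 6. If n₁, …, n_N are nonnegative reals with (1/N)Σnᵢ ≤ 6, then Σ A(nᵢ) ≤ N·A(6), with equality only if all nᵢ = 6. -/

import Mathlib

open Real

theorem jensen_type_lemma (A : ℝ → ℝ)
    (hconc : StrictConcaveOn ℝ (Set.Ici (2 : ℝ)) A)
    (hmono : StrictMonoOn A (Set.Ici (2 : ℝ)))
    (hzero : ∀ x ∈ Set.Icc (0 : ℝ) 2, A x = 0)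
    (hdouble : ∀ n : ℝ, 6 ≤ n → A n < 2 * A (n / 2))
    (N : ℕ) (hN : 0 < N) (n : Fin N → ℝ) (hn : ∀ i, 0 ≤ n i)
    (havg : (∑ i, n i) / N ≤ 6) :
    ∑ i, A (n i) ≤ N * A 6 ∧ (∑ i, A (n i) = N * A 6 → ∀ i, n i = 6) := by
  -- Three-point strict concavity inequality
  have three_pt : ∀ a b c : ℝ, 2 ≤ a → a < b → b < c →
      (c - b) * A a + (b - a) * A c < (c - a) * A b := by
    intro a b c ha hab hbc
    have hac : a < c := hab.trans hbc
    have hca : (0:ℝ) < c - a := by linarith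
    have hp : (0:ℝ) < (c - b) / (c - a) := div_pos (by linarith) hca
    have hq : (0:ℝ) < (b - a) / (c - a) := div_pos (by linarith) hca
    have hpq : (c - b) / (c - a) + (b - a) / (c - a) = 1 := by
      field_simp; ring
    have hc2 : c ∈ Set.Ici (2:ℝ) := by simp; linarith
    have key := hconc.2 (show a ∈ Set.Ici 2 from ha) hc2 (ne_of_lt hac) hp hq hpq
    simp only [smul_eq_mul] at key
    have hb : (c - b) / (c - a) * a + (b - a) / (c - a) * c = b := by
      field_simp; ring
    rw [hb] at key
    rw [div_mul_eq_mul_div, div_mul_eq_mul_div, ← add_div,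
      div_lt_iff₀ hca] at key
    nlinarith [key]
  -- The set of right chord slopes at 6
  set S : Set ℝ := (fun z => (A z - A 6) / (z - 6)) '' Set.Ioi 6 with hS
  have hSne : S.Nonempty := ⟨_, ⟨7, by norm_num, rfl⟩⟩
  have hub : ∀ y ∈ S, y ≤ (A 6 - A 3) / 3 := by
    rintro y ⟨z, hz, rfl⟩
    simp only [Set.mem_Ioi] at hz
    have h3 := three_pt 3 6 z (by norm_num) (by norm_num) hz
    rw [div_le_div_iff₀ (by linarith) (by norm_num)]
    nlinarith
  have hbdd : BddAbove S := ⟨_, hub⟩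
  set s : ℝ := sSup S with hs
  have hs_le : s ≤ (A 6 - A 3) / 3 := csSup_le hSne hub
  have hs_pos : 0 < s := by
    have h7 : (A 7 - A 6) / (7 - 6) ∈ S := ⟨7, by norm_num, rfl⟩
    have := le_csSup hbdd h7
    have hm : A 6 < A 7 := hmono (by simp; norm_num) (by simp; norm_num) (by norm_num)
    have : (A 7 - A 6) / (7 - 6) ≤ s := this
    norm_num at this
    linarith
  have hsA6 : 6 * s < A 6 := by
    have hd := hdouble 6 (le_refl 6)
    norm_num at hd
    rw [le_div_iff₀ (by norm_num : (0:ℝ) < 3)] at hs_le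
    linarith
  -- Strict supporting line bound for x ≠ 6
  have keyS : ∀ x : ℝ, 0 ≤ x → x ≠ 6 → A x < A 6 + s * (x - 6) := by
    intro x hx0 hxne
    rcases le_or_gt x 2 with hx2 | hx2
    · rw [hzero x ⟨hx0, hx2⟩]
      nlinarith [hs_pos, hsA6]
    · rcases lt_or_gt_of_ne hxne with hx6 | hx6
      · -- 2 < x < 6
        set y : ℝ := (x + 6) / 2 with hy
        have hy2 : 2 ≤ y := by rw [hy]; linarith
        have hxy : x < y := by rw [hy]; linarith
        have hy6 : y < 6 := by rw [hy]; linarith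
        have hsy : s ≤ (A 6 - A y) / (6 - y) := by
          apply csSup_le hSne
          rintro w ⟨z, hz, rfl⟩
          simp only [Set.mem_Ioi] at hz
          have h3 := three_pt y 6 z hy2 hy6 hz
          rw [div_le_div_iff₀ (by linarith) (by linarith)]
          nlinarith
        have hyx : (A 6 - A y) / (6 - y) < (A 6 - A x) / (6 - x) := by
          have h3 := three_pt x y 6 (le_of_lt hx2) hxy hy6
          rw [div_lt_div_iff₀ (by linarith) (by linarith)]
          nlinarith
        have h1 : s < (A 6 - A x) / (6 - x) := lt_of_le_of_lt hsy hyx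
        rw [lt_div_iff₀ (by linarith)] at h1
        nlinarith
      · -- x > 6
        set m : ℝ := (6 + x) / 2 with hm
        have h6m : 6 < m := by rw [hm]; linarith
        have hmx : m < x := by rw [hm]; linarith
        have hsm : (A m - A 6) / (m - 6) ≤ s :=
          le_csSup hbdd ⟨m, h6m, rfl⟩
        have hxm : (A x - A 6) / (x - 6) < (A m - A 6) / (m - 6) := by
          have h3 := three_pt 6 m x (by norm_num) h6m hmx
          rw [div_lt_div_iff₀ (by linarith) (by linarith)]
          nlinarith
        have h1 : (A x - A 6) / (x - 6) < s := lt_of_lt_of_le hxm hsm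
        rw [div_lt_iff₀ (by linarith)] at h1
        nlinarith
  have hle : ∀ i, A (n i) ≤ A 6 + s * (n i - 6) := by
    intro i
    rcases eq_or_ne (n i) 6 with h | h
    · rw [h]; simp
    · exact (keyS _ (hn i) h).le
  have hN' : (0:ℝ) < N := by exact_mod_cast hN
  have hT : ∑ i, n i ≤ 6 * N := by
    rw [div_le_iff₀ hN'] at havg; linarith
  have hsum_eq : ∑ i, (A 6 + s * (n i - 6)) = N * A 6 + s * ((∑ i, n i) - 6 * N) := by
    rw [Finset.sum_add_distrib, Finset.sum_const, Finset.card_univ, Fintype.card_fin,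
      ← Finset.mul_sum, Finset.sum_sub_distrib, Finset.sum_const, Finset.card_univ,
      Fintype.card_fin]
    push_cast
    ring
  have hbound : ∑ i, (A 6 + s * (n i - 6)) ≤ N * A 6 := by
    rw [hsum_eq]
    nlinarith [hs_pos, hT]
  constructor
  · calc ∑ i, A (n i) ≤ ∑ i, (A 6 + s * (n i - 6)) :=
          Finset.sum_le_sum (fun i _ => hle i)
      _ ≤ N * A 6 := hbound
  · intro heq i
    by_contra hne
    have hstrict : ∑ i, A (n i) < ∑ i, (A 6 + s * (n i - 6)) :=
      Finset.sum_lt_sum (fun j _ => hle j)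
        ⟨i, Finset.mem_univ i, keyS _ (hn i) hne⟩
    linarith
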